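/- Under the stated assumptions, the relaxation step is order preserving: if ρ, σ ∈ ∏_{j=1}^M [0,R_j] satisfy ρ_j ≤ σ_j for every j = 1,…,M, then T_j(ρ) ≤ T_j(σ) for every j = 1,…,M. (This is the monotonicity step in the proof of Lemma 3.2, used to apply the Crandall–Tartar lemma.) -/

import Mathlib

open Set

private lemma incr_bounds (f : ℝ → ℝ) (hf : Differentiable ℝ f) {a b lo hi : ℝ}
    (hab : a ≤ b) (hd : ∀ x ∈ Icc a b, deriv f x ∈ Icc lo hi) :
    lo * (b - a) ≤ f b - f a ∧ f b - f a ≤ hi * (b - a) := by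
  rcases eq_or_lt_of_le hab with rfl | h
  · simp
  · obtain ⟨c, hc, hceq⟩ := exists_deriv_eq_slope f h hf.continuous.continuousOn
      hf.differentiableOn
    have hcm := hd c ⟨hc.1.le, hc.2.le⟩
    have hba : 0 < b - a := by linarith
    have heq : f b - f a = deriv f c * (b - a) := by
      field_simp at hceq; linarith
    constructor
    · rw [heq]; exact mul_le_mul_of_nonneg_right hcm.1 hba.le
    · rw [heq]; exact mul_le_mul_of_nonneg_right hcm.2 hba.le

/-- Monotonicity step in the proof of Lemma 3.2: the relaxation step is
order preserving on the box of admissible densities. -/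
theorem relaxation_step_order_preserving
(M : ℕ) (hM : 1 ≤ M)
    (R : ℕ → ℝ) (hR : ∀ j, 1 ≤ j → j ≤ M → 0 < R j)
    (𝒮 τ Δt : ℝ) (h𝒮 : 0 < 𝒮) (hτ : 0 < τ) (hΔt : 0 < Δt)
    (hΔtτ : Δt ≤ τ / (2 * 𝒮))
    (S : ℕ → ℝ → ℝ → ℝ)
    (hS0 : ∀ u w, S 0 u w = 0)
    (hSM : ∀ u w, S M u w = 0)
    (hSC1 : ∀ j, 1 ≤ j → j ≤ M - 1 → ContDiff ℝ 1 (Function.uncurry (S j)))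
    (hS1 : ∀ j, 1 ≤ j → j ≤ M - 1 → ∀ u ∈ Icc (0:ℝ) (R j), ∀ w ∈ Icc (0:ℝ) (R (j+1)),
      deriv (fun u' => S j u' w) u ∈ Icc (0:ℝ) 𝒮)
    (hS2 : ∀ j, 1 ≤ j → j ≤ M - 1 → ∀ u ∈ Icc (0:ℝ) (R j), ∀ w ∈ Icc (0:ℝ) (R (j+1)),
      deriv (fun w' => S j u w') w ∈ Icc (-𝒮) (0:ℝ))
    (hS00 : ∀ j, 1 ≤ j → j ≤ M - 1 → S j 0 0 = 0)
    (hSRR : ∀ j, 1 ≤ j → j ≤ M - 1 → S j (R j) (R (j+1)) = 0)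
    (g : (ℕ → ℝ) → ℕ → ℝ)
    (hg : ∀ ρ j, g ρ j = S (j-1) (ρ (j-1)) (ρ j) - S j (ρ j) (ρ (j+1)))
    (T : (ℕ → ℝ) → ℕ → ℝ)
    (hT : ∀ ρ j, T ρ j = ρ j + (Δt / τ) * g ρ j)
    (ρ σ : ℕ → ℝ)
    (hρ : ∀ j, 1 ≤ j → j ≤ M → ρ j ∈ Icc (0:ℝ) (R j))
    (hσ : ∀ j, 1 ≤ j → j ≤ M → σ j ∈ Icc (0:ℝ) (R j))
    (hle : ∀ j, 1 ≤ j → j ≤ M → ρ j ≤ σ j) :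
    ∀ j, 1 ≤ j → j ≤ M → T ρ j ≤ T σ j := by
  have key : ∀ i, 1 ≤ i → i ≤ M - 1 → ∀ a1 b1 a2 b2 : ℝ,
      a1 ∈ Icc (0:ℝ) (R i) → b1 ∈ Icc (0:ℝ) (R i) →
      a2 ∈ Icc (0:ℝ) (R (i+1)) → b2 ∈ Icc (0:ℝ) (R (i+1)) →
      a1 ≤ b1 → a2 ≤ b2 →
      -𝒮 * (b2 - a2) ≤ S i b1 b2 - S i a1 a2 ∧
      S i b1 b2 - S i a1 a2 ≤ 𝒮 * (b1 - a1) := by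
    intro i h1 h2 a1 b1 a2 b2 ha1 hb1 ha2 hb2 h12 h34
    have hdiff : Differentiable ℝ (Function.uncurry (S i)) :=
      (hSC1 i h1 h2).differentiable one_ne_zero
    have hdu : ∀ w, Differentiable ℝ (fun u => S i u w) := fun w =>
      hdiff.comp (differentiable_id.prodMk (differentiable_const w))
    have hdw : ∀ u, Differentiable ℝ (fun w => S i u w) := fun u =>
      hdiff.comp ((differentiable_const u).prodMk differentiable_id)
    have B1 := incr_bounds (fun u => S i u b2) (hdu b2) h12 (fun x hx =>
      hS1 i h1 h2 x ⟨ha1.1.trans hx.1, hx.2.trans hb1.2⟩ b2 hb2)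
    have B2 := incr_bounds (fun w => S i a1 w) (hdw a1) h34 (fun x hx =>
      hS2 i h1 h2 a1 ha1 x ⟨ha2.1.trans hx.1, hx.2.trans hb2.2⟩)
    have e1 := B1.1
    have e2 := B1.2
    have e3 := B2.1
    have e4 := B2.2
    constructor <;> nlinarith [e1, e2, e3, e4]
  intro j hj1 hjM
  have hk : 0 ≤ Δt / τ := div_nonneg hΔt.le hτ.le
  have hk2 : (Δt / τ) * (2 * 𝒮) ≤ 1 := by
    have h1 : Δt * (2 * 𝒮) ≤ τ := (le_div_iff₀ (by positivity)).mp hΔtτ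
    rw [div_mul_eq_mul_div, div_le_one hτ]
    exact h1
  have he : 0 ≤ σ j - ρ j := by linarith [hle j hj1 hjM]
  have hA : -𝒮 * (σ j - ρ j) ≤ S (j-1) (σ (j-1)) (σ j) - S (j-1) (ρ (j-1)) (ρ j) := by
    rcases eq_or_lt_of_le hj1 with hj | hj
    · have h0 : j - 1 = 0 := by omega
      rw [h0, hS0, hS0]
      nlinarith
    · have h1 : 1 ≤ j - 1 := by omega
      have h2 : j - 1 ≤ M - 1 := by omega
      have hj' : j - 1 + 1 = j := by omega
      exact (key (j-1) h1 h2 (ρ (j-1)) (σ (j-1)) (ρ j) (σ j)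
        (hρ (j-1) h1 (by omega)) (hσ (j-1) h1 (by omega))
        (by rw [hj']; exact hρ j hj1 hjM) (by rw [hj']; exact hσ j hj1 hjM)
        (hle (j-1) h1 (by omega)) (hle j hj1 hjM)).1
  have hB : S j (σ j) (σ (j+1)) - S j (ρ j) (ρ (j+1)) ≤ 𝒮 * (σ j - ρ j) := by
    rcases eq_or_lt_of_le hjM with hj | hj
    · rw [hj] at he ⊢
      rw [hSM, hSM]
      nlinarith
    · have h2 : j ≤ M - 1 := by omega
      exact (key j hj1 h2 (ρ j) (σ j) (ρ (j+1)) (σ (j+1))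
        (hρ j hj1 hjM) (hσ j hj1 hjM)
        (hρ (j+1) (by omega) (by omega)) (hσ (j+1) (by omega) (by omega))
        (hle j hj1 hjM) (hle (j+1) (by omega) (by omega))).2
  rw [hT, hT, hg, hg]
  have p1 : 0 ≤ (Δt / τ) * ((S (j-1) (σ (j-1)) (σ j) - S (j-1) (ρ (j-1)) (ρ j))
      + 𝒮 * (σ j - ρ j)) := mul_nonneg hk (by linarith)
  have p2 : 0 ≤ (Δt / τ) * (𝒮 * (σ j - ρ j)
      - (S j (σ j) (σ (j+1)) - S j (ρ j) (ρ (j+1)))) := mul_nonneg hk (by linarith)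
  have p3 : 0 ≤ (σ j - ρ j) * (1 - (Δt / τ) * (2 * 𝒮)) := mul_nonneg he (by linarith)
  nlinarith [p1, p2, p3]
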